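/- (Von Neumann mean ergodic theorem) Let U be a unitary operator on a Hilbert space H and let P be the orthogonal projection onto the subspace of U-invariant vectors {φ : Uφ = φ}. Then for every φ ∈ H, the Cesàro averages (1/N)∑_{k=0}^{N−1} U^k φ converge in norm to Pφ as N → ∞. -/

import Mathlib

open Filter
open scoped ComplexInnerProductSpace

/-- **Von Neumann mean ergodic theorem.** Let `U` be a unitary operator on a complex
Hilbert space `H` and `P` the orthogonal projection onto the subspace of `U`-invariant
vectors (characterized by: `P` maps into the fixed subspace and `φ - Pφ` is orthogonal
to every fixed vector). Then for every `φ ∈ H` the Cesàro averages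
`(1/N) ∑_{k<N} U^k φ` converge in norm to `P φ`. -/
theorem von_neumann_mean_ergodic
    {H : Type*} [NormedAddCommGroup H] [InnerProductSpace ℂ H] [CompleteSpace H]
    (U : H →L[ℂ] H) (hU : U ∈ unitary (H →L[ℂ] H))
    (P : H →L[ℂ] H)
    (hPfix : ∀ φ : H, U (P φ) = P φ)
    (hPorth : ∀ φ ψ : H, U ψ = ψ → inner (𝕜 := ℂ) (φ - P φ) ψ = 0)
    (φ : H) :
    Tendsto (fun N : ℕ => (N : ℂ)⁻¹ • ∑ k ∈ Finset.range N, (U ^ k) φ)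
      atTop (nhds (P φ)) := by
  classical
  set ψ := φ - P φ with hψdef
  have hUk : ∀ (k : ℕ) (x : H), ‖(U ^ k) x‖ = ‖x‖ := fun k x =>
    ContinuousLinearMap.norm_map_of_mem_unitary (pow_mem hU k) x
  -- the range of U - 1
  set R : Submodule ℂ H := LinearMap.range ((U - 1 : H →L[ℂ] H) : H →ₗ[ℂ] H) with hR
  -- ψ lies in the closure of R
  have hψmem : ψ ∈ R.topologicalClosure := by
    rw [← Submodule.orthogonal_orthogonal_eq_closure]
    rw [Submodule.mem_orthogonal]
    intro χ hχ
    -- χ is orthogonal to range (U-1), hence fixed by U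
    have hadj : ContinuousLinearMap.adjoint U χ = χ := by
      apply ext_inner_left ℂ
      intro η
      have h0 : inner (𝕜 := ℂ) ((U - 1 : H →L[ℂ] H) η) χ = 0 := by
        rw [Submodule.mem_orthogonal] at hχ
        · exact hχ _ ⟨η, rfl⟩
      simp only [ContinuousLinearMap.sub_apply, ContinuousLinearMap.one_apply,
        inner_sub_left, sub_eq_zero] at h0
      rw [ContinuousLinearMap.adjoint_inner_right]
      exact h0
    have hfix : U χ = χ := by
      conv_lhs => rw [← hadj]
      have h1 : U * star U = 1 := hU.2
      rw [ContinuousLinearMap.star_eq_adjoint] at h1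
      calc U (ContinuousLinearMap.adjoint U χ)
          = (U * ContinuousLinearMap.adjoint U) χ := rfl
        _ = χ := by rw [h1]; rfl
    show inner (𝕜 := ℂ) χ (φ - P φ) = 0
    rw [← inner_conj_symm, hPorth φ χ hfix, map_zero]
  -- averages of elements of the form Uη - η tend to 0, and extend to the closure
  have key : Tendsto (fun N : ℕ => (N : ℂ)⁻¹ • ∑ k ∈ Finset.range N, (U ^ k) ψ)
      atTop (nhds 0) := by
    rw [NormedAddCommGroup.tendsto_nhds_zero]
    intro ε hε
    have hψcl : ψ ∈ closure (R : Set H) := by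
      rwa [← Submodule.topologicalClosure_coe]
    obtain ⟨y, hyR, hy⟩ := Metric.mem_closure_iff.mp hψcl (ε / 2) (by positivity)
    obtain ⟨η, hη⟩ := hyR
    -- bound on averages of arbitrary vectors
    have havg : ∀ (N : ℕ) (z : H), ‖(N : ℂ)⁻¹ • ∑ k ∈ Finset.range N, (U ^ k) z‖ ≤ ‖z‖ := by
      intro N z
      rcases Nat.eq_zero_or_pos N with h | h
      · simp [h]
      rw [norm_smul]
      have hsum : ‖∑ k ∈ Finset.range N, (U ^ k) z‖ ≤ N * ‖z‖ := by
        calc ‖∑ k ∈ Finset.range N, (U ^ k) z‖ ≤ ∑ k ∈ Finset.range N, ‖(U ^ k) z‖ :=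
              norm_sum_le _ _
          _ = ∑ k ∈ Finset.range N, ‖z‖ := Finset.sum_congr rfl (fun k _ => hUk k z)
          _ = N * ‖z‖ := by simp [Finset.sum_const, mul_comm]
      have hN : ‖(N : ℂ)⁻¹‖ = (N : ℝ)⁻¹ := by
        rw [norm_inv]; simp
      rw [hN]
      calc (N : ℝ)⁻¹ * ‖∑ k ∈ Finset.range N, (U ^ k) z‖ ≤ (N : ℝ)⁻¹ * (N * ‖z‖) := by
            apply mul_le_mul_of_nonneg_left hsum
            positivity
        _ = ‖z‖ := by
            field_simp
    -- telescoping for y = Uη - η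
    have htel : ∀ N : ℕ, ∑ k ∈ Finset.range N, (U ^ k) y = (U ^ N) η - η := by
      intro N
      have : ∀ k : ℕ, (U ^ k) y = (U ^ (k + 1)) η - (U ^ k) η := by
        intro k
        have : (U ^ k) ((U - 1 : H →L[ℂ] H) η) = (U ^ (k + 1)) η - (U ^ k) η := by
          rw [pow_succ]
          simp only [ContinuousLinearMap.sub_apply, ContinuousLinearMap.one_apply, map_sub,
            ContinuousLinearMap.mul_apply]
        rw [← hη]; exact this
      simp only [this]
      rw [Finset.sum_range_sub (fun k => (U ^ k) η)]
      simp
    obtain ⟨N₀, hN₀⟩ := exists_nat_gt (4 * ‖η‖ / ε)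
    rw [Filter.eventually_atTop]
    refine ⟨N₀ + 1, fun N hN => ?_⟩
    have hNpos : 0 < N := by omega
    have hNR : (0 : ℝ) < N := by exact_mod_cast hNpos
    have hsplit : (N : ℂ)⁻¹ • ∑ k ∈ Finset.range N, (U ^ k) ψ
        = (N : ℂ)⁻¹ • ∑ k ∈ Finset.range N, (U ^ k) (ψ - y)
          + (N : ℂ)⁻¹ • ∑ k ∈ Finset.range N, (U ^ k) y := by
      rw [← smul_add, ← Finset.sum_add_distrib]
      simp [map_sub]
    rw [hsplit]
    have h1 : ‖(N : ℂ)⁻¹ • ∑ k ∈ Finset.range N, (U ^ k) (ψ - y)‖ ≤ ‖ψ - y‖ := havg N _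
    have h2 : ‖(N : ℂ)⁻¹ • ∑ k ∈ Finset.range N, (U ^ k) y‖ ≤ (N : ℝ)⁻¹ * (2 * ‖η‖) := by
      rw [htel, norm_smul]
      have hNn : ‖(N : ℂ)⁻¹‖ = (N : ℝ)⁻¹ := by rw [norm_inv]; simp
      rw [hNn]
      apply mul_le_mul_of_nonneg_left _ (by positivity)
      calc ‖(U ^ N) η - η‖ ≤ ‖(U ^ N) η‖ + ‖η‖ := norm_sub_le _ _
        _ = 2 * ‖η‖ := by rw [hUk]; ring
    have hdist : ‖ψ - y‖ < ε / 2 := by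
      rw [← dist_eq_norm]; exact hy
    have h3 : (N : ℝ)⁻¹ * (2 * ‖η‖) < ε / 2 := by
      have hN' : (4 * ‖η‖ / ε : ℝ) < N := lt_of_lt_of_le hN₀ (by exact_mod_cast (by omega : N₀ ≤ N))
      rw [div_lt_iff₀ hε] at hN'
      rw [inv_mul_lt_iff₀ hNR]
      nlinarith [norm_nonneg η]
    calc ‖(N : ℂ)⁻¹ • ∑ k ∈ Finset.range N, (U ^ k) (ψ - y)
          + (N : ℂ)⁻¹ • ∑ k ∈ Finset.range N, (U ^ k) y‖
        ≤ ‖(N : ℂ)⁻¹ • ∑ k ∈ Finset.range N, (U ^ k) (ψ - y)‖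
          + ‖(N : ℂ)⁻¹ • ∑ k ∈ Finset.range N, (U ^ k) y‖ := norm_add_le _ _
      _ < ε / 2 + ε / 2 := add_lt_add (lt_of_le_of_lt h1 hdist) (lt_of_le_of_lt h2 h3)
      _ = ε := by ring
  -- conclusion
  have hfixpow : ∀ (k : ℕ), (U ^ k) (P φ) = P φ := by
    intro k
    induction k with
    | zero => simp
    | succ n ih =>
      rw [pow_succ]
      show (U ^ n) (U (P φ)) = P φ
      rw [hPfix, ih]
  have heq : ∀ᶠ N : ℕ in atTop,
      (N : ℂ)⁻¹ • ∑ k ∈ Finset.range N, (U ^ k) φ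
        = P φ + (N : ℂ)⁻¹ • ∑ k ∈ Finset.range N, (U ^ k) ψ := by
    filter_upwards [eventually_ge_atTop 1] with N hN
    have hφ : φ = P φ + ψ := by simp [hψdef]
    have hNne : (N : ℂ) ≠ 0 := by
      exact Nat.cast_ne_zero.mpr (by omega)
    calc (N : ℂ)⁻¹ • ∑ k ∈ Finset.range N, (U ^ k) φ
        = (N : ℂ)⁻¹ • ∑ k ∈ Finset.range N, ((U ^ k) (P φ) + (U ^ k) ψ) := by
          conv_lhs => rw [hφ]
          simp [map_add]
      _ = (N : ℂ)⁻¹ • ((N : ℂ) • P φ) + (N : ℂ)⁻¹ • ∑ k ∈ Finset.range N, (U ^ k) ψ := by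
          rw [Finset.sum_add_distrib, smul_add]
          congr 2
          simp only [hfixpow, Finset.sum_const, Finset.card_range]
          exact (Nat.cast_smul_eq_nsmul ℂ N (P φ)).symm
      _ = P φ + (N : ℂ)⁻¹ • ∑ k ∈ Finset.range N, (U ^ k) ψ := by
          rw [smul_smul, inv_mul_cancel₀ hNne, one_smul]
  rw [Filter.tendsto_congr' heq]
  have : Tendsto (fun N : ℕ => P φ + (N : ℂ)⁻¹ • ∑ k ∈ Finset.range N, (U ^ k) ψ)
      atTop (nhds (P φ + 0)) := tendsto_const_nhds.add key
  simpa using this
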